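/- Let F(Ω) = 1/(1 − Ω) − (Ω/(2(1 − Ω)^{3/2}))·arcosh((2 − Ω)/Ω) for 0 < Ω < 1, where arcosh(x) = ln(x + √(x² − 1)). Then lim_{Ω→1⁻} F(Ω) = 2/3. -/

import Mathlib

open Real Filter Set

private lemma hasDerivAt_logdiff {x : ℝ} (h1 : (0:ℝ) < 1 + x) (h2 : (0:ℝ) < 1 - x) :
    HasDerivAt (fun u : ℝ => Real.log (1+u) - Real.log (1-u))
      (1/(1+x) + 1/(1-x)) x := by
  have ha : HasDerivAt (fun u : ℝ => Real.log (1+u)) (1/(1+x)) x := by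
    simpa using (((hasDerivAt_id x).const_add 1).log h1.ne')
  have hb : HasDerivAt (fun u : ℝ => Real.log (1-u)) ((0-1)/(1-x)) x :=
    ((hasDerivAt_const x (1:ℝ)).sub (hasDerivAt_id x)).log h2.ne'
  have := ha.sub hb
  refine this.congr_deriv ?_
  ring

private lemma contOn_logdiff : ContinuousOn
    (fun u : ℝ => Real.log (1+u) - Real.log (1-u)) (Icc (0:ℝ) (1/2)) := by
  apply ContinuousOn.sub
  · exact ((continuousOn_const.add continuousOn_id).log
      (fun x hx => by simpa using (show (0:ℝ) < 1 + x by nlinarith [hx.1, hx.2]).ne'))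
  · exact ((continuousOn_const.sub continuousOn_id).log
      (fun x hx => by simpa using (show (0:ℝ) < 1 - x by nlinarith [hx.1, hx.2]).ne'))

private lemma log_lb : ∀ u ∈ Icc (0:ℝ) (1/2),
    2*u + 2/3*u^3 ≤ Real.log ((1+u)/(1-u)) := by
  have hmono : MonotoneOn (fun u : ℝ => (Real.log (1+u) - Real.log (1-u)) - (2*u + 2/3*u^3))
      (Icc (0:ℝ) (1/2)) := by
    apply monotoneOn_of_deriv_nonneg (convex_Icc _ _)
    · exact contOn_logdiff.sub (by fun_prop)
    · intro x hx
      rw [interior_Icc] at hx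
      have h1 : (0:ℝ) < 1 + x := by nlinarith [hx.1, hx.2]
      have h2 : (0:ℝ) < 1 - x := by nlinarith [hx.1, hx.2]
      have hc : HasDerivAt (fun u : ℝ => 2*u + 2/3*u^3) (2*1 + 2/3*((3:ℕ)*x^2)) x :=
        ((hasDerivAt_id x).const_mul 2).add
          (by simpa using (hasDerivAt_pow 3 x).const_mul (2/3:ℝ))
      exact ((hasDerivAt_logdiff h1 h2).sub hc).differentiableAt.differentiableWithinAt
    · intro x hx
      rw [interior_Icc] at hx
      have h1 : (0:ℝ) < 1 + x := by nlinarith [hx.1, hx.2]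
      have h2 : (0:ℝ) < 1 - x := by nlinarith [hx.1, hx.2]
      have hc : HasDerivAt (fun u : ℝ => 2*u + 2/3*u^3) (2*1 + 2/3*((3:ℕ)*x^2)) x :=
        ((hasDerivAt_id x).const_mul 2).add
          (by simpa using (hasDerivAt_pow 3 x).const_mul (2/3:ℝ))
      erw [((hasDerivAt_logdiff h1 h2).sub hc).deriv]
      have e1 : 1/(1+x) + 1/(1-x) = 2/((1+x)*(1-x)) := by field_simp; ring
      rw [e1]
      have : (2*1 + 2/3*((3:ℕ)*x^2) : ℝ) ≤ 2/((1+x)*(1-x)) := by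
        rw [le_div_iff₀ (by positivity)]
        push_cast
        nlinarith [pow_nonneg hx.1.le 4]
      linarith
  intro u hu
  have h0 : (fun u : ℝ => (Real.log (1+u) - Real.log (1-u)) - (2*u + 2/3*u^3)) 0 = 0 := by
    norm_num
  have := hmono (left_mem_Icc.mpr (by norm_num)) hu hu.1
  rw [h0] at this
  have h2 : (0:ℝ) < 1 - u := by nlinarith [hu.1, hu.2]
  have h1 : (0:ℝ) < 1 + u := by nlinarith [hu.1]
  rw [Real.log_div h1.ne' h2.ne']
  linarith [this]

private lemma log_ub : ∀ u ∈ Icc (0:ℝ) (1/2),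
    Real.log ((1+u)/(1-u)) ≤ 2*u + 2/3*u^3 + 4/5*u^5 := by
  have hmono : MonotoneOn
      (fun u : ℝ => (2*u + (2/3*u^3 + 4/5*u^5)) - (Real.log (1+u) - Real.log (1-u)))
      (Icc (0:ℝ) (1/2)) := by
    apply monotoneOn_of_deriv_nonneg (convex_Icc _ _)
    · exact (by fun_prop : ContinuousOn (fun u : ℝ => 2*u + (2/3*u^3 + 4/5*u^5))
        (Icc (0:ℝ) (1/2))).sub contOn_logdiff
    · intro x hx
      rw [interior_Icc] at hx
      have h1 : (0:ℝ) < 1 + x := by nlinarith [hx.1, hx.2]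
      have h2 : (0:ℝ) < 1 - x := by nlinarith [hx.1, hx.2]
      have hc3 : HasDerivAt (fun u : ℝ => 2/3*u^3) (2/3*((3:ℕ)*x^2)) x := by
        simpa using (hasDerivAt_pow 3 x).const_mul (2/3:ℝ)
      have hc5 : HasDerivAt (fun u : ℝ => 4/5*u^5) (4/5*((5:ℕ)*x^4)) x := by
        simpa using (hasDerivAt_pow 5 x).const_mul (4/5:ℝ)
      have hc : HasDerivAt (fun u : ℝ => 2*u + (2/3*u^3 + 4/5*u^5))
          (2*1 + (2/3*((3:ℕ)*x^2) + 4/5*((5:ℕ)*x^4))) x :=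
        ((hasDerivAt_id x).const_mul 2).add (hc3.add hc5)
      exact (hc.sub (hasDerivAt_logdiff h1 h2)).differentiableAt.differentiableWithinAt
    · intro x hx
      rw [interior_Icc] at hx
      have h1 : (0:ℝ) < 1 + x := by nlinarith [hx.1, hx.2]
      have h2 : (0:ℝ) < 1 - x := by nlinarith [hx.1, hx.2]
      have hc3 : HasDerivAt (fun u : ℝ => 2/3*u^3) (2/3*((3:ℕ)*x^2)) x := by
        simpa using (hasDerivAt_pow 3 x).const_mul (2/3:ℝ)
      have hc5 : HasDerivAt (fun u : ℝ => 4/5*u^5) (4/5*((5:ℕ)*x^4)) x := by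
        simpa using (hasDerivAt_pow 5 x).const_mul (4/5:ℝ)
      have hc : HasDerivAt (fun u : ℝ => 2*u + (2/3*u^3 + 4/5*u^5))
          (2*1 + (2/3*((3:ℕ)*x^2) + 4/5*((5:ℕ)*x^4))) x :=
        ((hasDerivAt_id x).const_mul 2).add (hc3.add hc5)
      erw [(hc.sub (hasDerivAt_logdiff h1 h2)).deriv]
      have e1 : 1/(1+x) + 1/(1-x) = 2/((1+x)*(1-x)) := by field_simp; ring
      rw [e1]
      have : 2/((1+x)*(1-x)) ≤ (2*1 + (2/3*((3:ℕ)*x^2) + 4/5*((5:ℕ)*x^4)) : ℝ) := by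
        rw [div_le_iff₀ (by positivity)]
        push_cast
        have hxx : 0 ≤ x^4*(1 - 2*x^2) :=
          mul_nonneg (by positivity) (by nlinarith [hx.1, hx.2])
        nlinarith [hxx]
      linarith
  intro u hu
  have h0 : (fun u : ℝ => (2*u + (2/3*u^3 + 4/5*u^5)) - (Real.log (1+u) - Real.log (1-u))) 0
      = 0 := by norm_num
  have := hmono (left_mem_Icc.mpr (by norm_num)) hu hu.1
  rw [h0] at this
  have h2 : (0:ℝ) < 1 - u := by nlinarith [hu.1, hu.2]
  have h1 : (0:ℝ) < 1 + u := by nlinarith [hu.1]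
  rw [Real.log_div h1.ne' h2.ne']
  simp only at this
  linarith [this]

/-- For the Carroll–Press–Turner function of the open (`k = −1`) matter dominated
universe, `F(Ω) = 1/(1−Ω) − (Ω/(2(1−Ω)^{3/2}))·arcosh((2−Ω)/Ω)` with
`arcosh(x) = ln(x + √(x²−1))`, one has `F(Ω) → 2/3` as `Ω → 1⁻`. -/
theorem stmt_14 (arcosh F : ℝ → ℝ)
    (harcosh : ∀ x, arcosh x = Real.log (x + Real.sqrt (x ^ 2 - 1)))
    (hF : ∀ Ω ∈ Set.Ioo (0 : ℝ) 1,
      F Ω = 1 / (1 - Ω)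
        - (Ω / (2 * (1 - Ω) ^ ((3 : ℝ) / 2))) * arcosh ((2 - Ω) / Ω)) :
    Tendsto F (nhdsWithin 1 (Set.Ioo (0 : ℝ) 1)) (nhds (2 / 3)) := by
  have key : ∀ Ω ∈ Set.Ioo (0:ℝ) 1, 3/4 < Ω →
      2/3 - 2/5*(1-Ω) ≤ F Ω ∧ F Ω ≤ 2/3 + 1/3*(1-Ω) := by
    intro Ω hΩ h34
    obtain ⟨hΩ0, hΩ1⟩ := hΩ
    set u : ℝ := Real.sqrt (1 - Ω) with hu_def
    have hε : (0:ℝ) < 1 - Ω := by linarith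
    have hu0 : 0 < u := Real.sqrt_pos.mpr hε
    have hu2 : u^2 = 1 - Ω := Real.sq_sqrt hε.le
    have hu12 : u ≤ 1/2 := by nlinarith
    have hu1 : u < 1 := by linarith
    -- arcosh value
    have hsq : ((2 - Ω)/Ω)^2 - 1 = (2*u/Ω)^2 := by
      field_simp
      nlinarith [hu2]
    have harcval : arcosh ((2 - Ω)/Ω) = Real.log ((1+u)/(1-u)) := by
      rw [harcosh, hsq, Real.sqrt_sq (div_nonneg (by linarith) hΩ0.le)]
      congr 1
      rw [← add_div, div_eq_div_iff hΩ0.ne' (by linarith : (0:ℝ) < 1-u).ne']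
      linear_combination (-2:ℝ) * hu2
    -- rpow value
    have hrpow : (1-Ω) ^ ((3:ℝ)/2) = u^3 := by
      rw [← Real.rpow_natCast u 3, hu_def, Real.sqrt_eq_rpow, ← Real.rpow_mul hε.le]
      norm_num
    set L : ℝ := Real.log ((1+u)/(1-u)) with hL_def
    have hFeq : F Ω = (u - Ω * L / 2) / u^3 := by
      rw [hF Ω ⟨hΩ0, hΩ1⟩, hrpow, harcval, ← hu2]
      field_simp
    have huIcc : u ∈ Icc (0:ℝ) (1/2) := ⟨hu0.le, hu12⟩
    have hL1 := log_lb u huIcc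
    have hL2 := log_ub u huIcc
    rw [← hL_def] at hL1 hL2
    have hu3 : (0:ℝ) < u^3 := by positivity
    constructor
    · rw [hFeq, le_div_iff₀ hu3]
      have : Ω * L ≤ Ω * (2*u + 2/3*u^3 + 4/5*u^5) :=
        mul_le_mul_of_nonneg_left hL2 hΩ0.le
      nlinarith [hu2, pow_nonneg hu0.le 5, pow_nonneg hu0.le 7]
    · rw [hFeq, div_le_iff₀ hu3]
      have : Ω * (2*u + 2/3*u^3) ≤ Ω * L :=
        mul_le_mul_of_nonneg_left hL1 hΩ0.le
      nlinarith [hu2, pow_nonneg hu0.le 5]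
  have hmem : ∀ᶠ Ω in nhdsWithin (1:ℝ) (Set.Ioo 0 1), Ω ∈ Set.Ioo (0:ℝ) 1 :=
    eventually_mem_nhdsWithin
  have h34 : ∀ᶠ Ω in nhdsWithin (1:ℝ) (Set.Ioo 0 1), (3/4:ℝ) < Ω :=
    eventually_nhdsWithin_of_eventually_nhds (eventually_gt_nhds (by norm_num))
  have hlow : ∀ᶠ Ω in nhdsWithin (1:ℝ) (Set.Ioo 0 1), 2/3 - 2/5*(1-Ω) ≤ F Ω := by
    filter_upwards [hmem, h34] with Ω h1 h2
    exact (key Ω h1 h2).1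
  have hhigh : ∀ᶠ Ω in nhdsWithin (1:ℝ) (Set.Ioo 0 1), F Ω ≤ 2/3 + 1/3*(1-Ω) := by
    filter_upwards [hmem, h34] with Ω h1 h2
    exact (key Ω h1 h2).2
  have hg : Tendsto (fun Ω : ℝ => 2/3 - 2/5*(1-Ω)) (nhdsWithin 1 (Set.Ioo 0 1))
      (nhds (2/3)) := by
    have hc : Continuous (fun Ω : ℝ => 2/3 - 2/5*(1-Ω)) := by fun_prop
    have h2 : Tendsto (fun Ω : ℝ => 2/3 - 2/5*(1-Ω)) (nhdsWithin 1 (Set.Ioo 0 1))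
        (nhds (2/3 - 2/5*(1-1))) :=
      (hc.tendsto 1).mono_left (nhdsWithin_le_nhds (s := Set.Ioo (0:ℝ) 1))
    convert h2 using 2
    norm_num
  have hh : Tendsto (fun Ω : ℝ => 2/3 + 1/3*(1-Ω)) (nhdsWithin 1 (Set.Ioo 0 1))
      (nhds (2/3)) := by
    have hc : Continuous (fun Ω : ℝ => 2/3 + 1/3*(1-Ω)) := by fun_prop
    have h2 : Tendsto (fun Ω : ℝ => 2/3 + 1/3*(1-Ω)) (nhdsWithin 1 (Set.Ioo 0 1))
        (nhds (2/3 + 1/3*(1-1))) :=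
      (hc.tendsto 1).mono_left (nhdsWithin_le_nhds (s := Set.Ioo (0:ℝ) 1))
    convert h2 using 2
    norm_num
  exact tendsto_of_tendsto_of_tendsto_of_le_of_le' hg hh hlow hhigh
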